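/- Let M(U, τ) be a special Moufang set with U abelian, and let V ≤ U be a root subgroup whose induced Moufang subset is isomorphic to the projective Moufang set M(F) of a finite field F. Then the group H₀ = ⟨μ_a μ_b : a, b ∈ V^#⟩ acts faithfully on V and is cyclic, isomorphic to the group of squares (F*)². -/

import Mathlib

variable {U : Type*}

/-- The translation `α_a` on `X = U ∪ {∞}`, where `none` plays the role of the point `∞`
and `some 0` plays the role of the point `0`. -/
def alphaPerm [AddGroup U] (a : U) : Equiv.Perm (Option U) :=
  Equiv.optionCongr (Equiv.addRight a)

/-- The image in `U` of the point `a ∈ U ⊆ X = U ∪ {∞}` under a permutation of `X`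
(defaulting to `0` in the degenerate case where the image is `∞`). -/
def pact [Zero U] (g : Equiv.Perm (Option U)) (a : U) : U := (g (some a)).getD 0

/-- A Moufang set `M(U, τ)` in the algebraic description of De Medts–Segev:
the set is `X = U ∪ {∞}` (modelled by `Option U`), the root group at `∞` is
`U_∞ = {α_a | a ∈ U}`, the root group at `0` is `U_0 = U_∞^τ` (here written with
Lean's left-composition convention, so `α_g^τ = τ * α_g * τ⁻¹`), for `a ≠ 0` the map
`μ a` is the unique element of the double coset `U_0 · α_a · U_0` interchanging
`0` and `∞`, and the Moufang condition holds: conjugation by `μ a` interchanges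
the root groups `U_∞` and `U_0`. -/
structure MoufangSet (U : Type*) [AddGroup U] where
  τ : Equiv.Perm (Option U)
  τ_inf : τ none = some 0
  τ_zero : τ (some 0) = none
  μ : U → Equiv.Perm (Option U)
  μ_mem : ∀ a : U, a ≠ 0 → ∃ g h : U,
    μ a = (τ * alphaPerm g * τ⁻¹) * alphaPerm a * (τ * alphaPerm h * τ⁻¹)
  μ_inf : ∀ a : U, a ≠ 0 → μ a none = some 0
  μ_zero : ∀ a : U, a ≠ 0 → μ a (some 0) = none
  μ_unique : ∀ a : U, a ≠ 0 → ∀ m : Equiv.Perm (Option U),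
    (∃ g h : U, m = (τ * alphaPerm g * τ⁻¹) * alphaPerm a * (τ * alphaPerm h * τ⁻¹)) →
    m none = some 0 → m (some 0) = none → m = μ a
  moufang₁ : ∀ a : U, a ≠ 0 → ∀ b : U, ∃ c : U,
    μ a * alphaPerm b * (μ a)⁻¹ = τ * alphaPerm c * τ⁻¹
  moufang₂ : ∀ a : U, a ≠ 0 → ∀ b : U, ∃ c : U,
    μ a * (τ * alphaPerm b * τ⁻¹) * (μ a)⁻¹ = alphaPerm c

namespace MoufangSet

variable [AddGroup U] (M : MoufangSet U)

/-- The Hua group of `M(U, τ)`: the subgroup generated by the Hua maps `h_a = τ μ_a`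
(right-action convention: apply `τ` first, then `μ_a`; with Lean's left-composition
convention this is `μ_a * τ`). -/
def huaGroup : Subgroup (Equiv.Perm (Option U)) :=
  Subgroup.closure {g | ∃ a : U, a ≠ 0 ∧ g = M.μ a * M.τ}

/-- A Moufang set `M(U, τ)` is special if `(−a)τ = −(aτ)` for all nontrivial `a ∈ U`. -/
def Special : Prop := ∀ a : U, a ≠ 0 → pact M.τ (-a) = -(pact M.τ a)

open Classical in
/-- The Hua map `h_a` of `a ∈ U`, as a map `U → U` (`x ↦ x h_a`, i.e. apply `τ` then
`μ_a` to the point `x`), with `h_0` defined to be the constant zero map. -/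
noncomputable def hmap (a x : U) : U := if a = 0 then 0 else pact (M.μ a * M.τ) x

/-- The endomorphism `h_{a,b} : x ↦ x h_{a+b} − x h_a − x h_b`. -/
noncomputable def hmap₂ (a b x : U) : U := M.hmap (a + b) x - M.hmap a x - M.hmap b x

end MoufangSet

section Aux
variable [AddCommGroup U]

@[simp] lemma alphaPerm_some (x u : U) : alphaPerm x (some u) = some (u + x) := rfl
@[simp] lemma alphaPerm_none (x : U) : alphaPerm x none = none := rfl

lemma alphaPerm_mul (x y : U) : alphaPerm x * alphaPerm y = alphaPerm (y + x) := by
  ext u; cases u <;> simp [Equiv.Perm.mul_apply, add_assoc]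

@[simp] lemma alphaPerm_zero : alphaPerm (0 : U) = 1 := by
  ext u; cases u <;> simp

@[simp] lemma alphaPerm_inv (x : U) : (alphaPerm x)⁻¹ = alphaPerm (-x) := by
  rw [inv_eq_iff_mul_eq_one, alphaPerm_mul]; simp

variable (M : MoufangSet U)

/-- `C g = τ α_g τ⁻¹`, an element of `U_0`. -/
def MoufangSet.CC (g : U) : Equiv.Perm (Option U) := M.τ * alphaPerm g * M.τ⁻¹

lemma CC_mul (x y : U) : M.CC x * M.CC y = M.CC (x + y) := by
  unfold MoufangSet.CC
  rw [show M.τ * alphaPerm x * M.τ⁻¹ * (M.τ * alphaPerm y * M.τ⁻¹)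
      = M.τ * (alphaPerm x * alphaPerm y) * M.τ⁻¹ by group, alphaPerm_mul, add_comm]

@[simp] lemma CC_zero : M.CC (0 : U) = 1 := by
  unfold MoufangSet.CC; simp

@[simp] lemma CC_inv (x : U) : (M.CC x)⁻¹ = M.CC (-x) := by
  rw [eq_comm, eq_inv_iff_mul_eq_one, CC_mul]; simp

@[simp] lemma tau_inv_none : M.τ⁻¹ none = some (0 : U) := by
  rw [Equiv.Perm.inv_def, Equiv.symm_apply_eq, M.τ_zero]

@[simp] lemma tau_inv_zero : M.τ⁻¹ (some (0 : U)) = none := by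
  rw [Equiv.Perm.inv_def, Equiv.symm_apply_eq, M.τ_inf]

lemma CC_apply (g : U) (u : Option U) : M.CC g u = M.τ (alphaPerm g (M.τ⁻¹ u)) := rfl

@[simp] lemma CC_some_zero (g : U) : M.CC g (some (0 : U)) = some 0 := by
  rw [CC_apply, tau_inv_zero, alphaPerm_none, M.τ_inf]

@[simp] lemma CC_none (g : U) : M.CC g none = M.τ (some g) := by
  rw [CC_apply, tau_inv_none, alphaPerm_some, zero_add]

lemma pact_eq {g : Equiv.Perm (Option U)} {x y : U} (h : g (some x) = some y) :
    pact g x = y := by simp [pact, h]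

lemma some_pact {g : Equiv.Perm (Option U)} {x : U} (h : g (some x) ≠ none) :
    g (some x) = some (pact g x) := by
  cases hh : g (some x) with
  | none => exact absurd hh h
  | some y => simp [pact, hh]

/-- τ sends nonzero points to nonzero points. -/
lemma tau_some {x : U} (hx : x ≠ 0) :
    M.τ (some x) = some (pact M.τ x) ∧ pact M.τ x ≠ 0 := by
  have h1 : M.τ (some x) ≠ none := by
    intro h
    exact hx (by simpa using M.τ.injective (h.trans M.τ_zero.symm))
  refine ⟨some_pact h1, ?_⟩
  intro h0
  have := some_pact h1
  rw [h0] at this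
  exact absurd (M.τ.injective (this.trans M.τ_inf.symm)) (by simp)

lemma tau_inv_some {x : U} (hx : x ≠ 0) :
    M.τ⁻¹ (some x) = some (pact M.τ⁻¹ x) ∧ pact M.τ⁻¹ x ≠ 0 := by
  have h1 : M.τ⁻¹ (some x) ≠ none := by
    intro h
    rw [Equiv.Perm.inv_def, Equiv.symm_apply_eq, M.τ_inf] at h
    simp [Equiv.Perm.inv_def, Equiv.symm_apply_eq, M.τ_inf] at h
    exact hx h
  refine ⟨some_pact h1, ?_⟩
  intro h0
  have := some_pact h1
  rw [h0] at this
  rw [Equiv.Perm.inv_def, Equiv.symm_apply_eq, M.τ_zero] at this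
  simp at this

lemma t_t' {x : U} (hx : x ≠ 0) : pact M.τ (pact M.τ⁻¹ x) = x := by
  have h := (tau_inv_some M hx).1
  have h2 := (tau_inv_some M hx).2
  apply pact_eq
  rw [← h, ← Equiv.Perm.mul_apply, mul_inv_cancel, Equiv.Perm.one_apply]

lemma t'_t {x : U} (hx : x ≠ 0) : pact M.τ⁻¹ (pact M.τ x) = x := by
  have h := (tau_some M hx).1
  apply pact_eq
  rw [← h, ← Equiv.Perm.mul_apply, inv_mul_cancel, Equiv.Perm.one_apply]

section WithSpecial
variable (hs : M.Special)
include hs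

/-- `t` is odd. -/
lemma t_neg {x : U} (hx : x ≠ 0) : pact M.τ (-x) = -pact M.τ x := hs x hx

lemma t'_neg {x : U} (hx : x ≠ 0) : pact M.τ⁻¹ (-x) = -pact M.τ⁻¹ x := by
  have h2 := (tau_inv_some M hx).2
  have h1 := (tau_inv_some M hx).1
  have hneg : (-pact M.τ⁻¹ x) ≠ 0 := neg_ne_zero.mpr h2
  have hτp : M.τ (some (pact M.τ⁻¹ x)) = some x := by
    rw [← h1, ← Equiv.Perm.mul_apply, mul_inv_cancel, Equiv.Perm.one_apply]
  have hpx : pact M.τ (pact M.τ⁻¹ x) = x := pact_eq hτp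
  have h3 : M.τ (some (-pact M.τ⁻¹ x)) = some (-x) := by
    rw [(tau_some M hneg).1, t_neg M hs h2, hpx]
  apply pact_eq
  rw [← h3, ← Equiv.Perm.mul_apply, inv_mul_cancel, Equiv.Perm.one_apply]

omit hs in
lemma mu_some {c x : U} (hc : c ≠ 0) (hx : x ≠ 0) :
    M.μ c (some x) = some (pact (M.μ c) x) ∧ pact (M.μ c) x ≠ 0 := by
  have h1 : M.μ c (some x) ≠ none := by
    intro h
    have := (M.μ c).injective (h.trans (M.μ_zero c hc).symm)
    exact hx (by simpa using this)
  refine ⟨some_pact h1, ?_⟩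
  intro h0
  have := some_pact h1
  rw [h0] at this
  have := (M.μ c).injective (this.trans (M.μ_inf c hc).symm)
  simp at this

/-- The `W`-form of `μ_c`: `μ_c = C_{-t' c} · α_c · C_{-t' c}`. -/
lemma mu_W {c : U} (hc : c ≠ 0) :
    M.μ c = M.CC (-pact M.τ⁻¹ c) * alphaPerm c * M.CC (-pact M.τ⁻¹ c) := by
  obtain ⟨g, h, hgh⟩ := M.μ_mem c hc
  have hgh' : M.μ c = M.CC g * alphaPerm c * M.CC h := hgh
  have hp := (tau_inv_some M hc)
  set p := pact M.τ⁻¹ c with hpdef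
  have hg : g = -p := by
    have e1 : M.μ c (some 0) = none := M.μ_zero c hc
    rw [hgh'] at e1
    simp only [Equiv.Perm.mul_apply, CC_some_zero, alphaPerm_some, zero_add] at e1
    rw [CC_apply, hp.1, alphaPerm_some] at e1
    have h2 : (some (p + g) : Option U) = M.τ⁻¹ none := by
      rw [← e1, ← Equiv.Perm.mul_apply, inv_mul_cancel, Equiv.Perm.one_apply]
    rw [tau_inv_none] at h2
    have h3 : p + g = 0 := by simpa using h2
    exact eq_neg_of_add_eq_zero_right h3
  have hh : h = -p := by
    have e1 : M.μ c none = some 0 := M.μ_inf c hc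
    rw [hgh'] at e1
    simp only [Equiv.Perm.mul_apply, CC_none] at e1
    by_cases hh0 : h = 0
    · rw [hh0, M.τ_zero, alphaPerm_none, CC_none] at e1
      have := M.τ.injective (e1.trans (M.τ_inf).symm)
      simp at this
    · rw [(tau_some M hh0).1, alphaPerm_some] at e1
      set q := pact M.τ h with hq
      by_cases hqc : q + c = 0
      · have hqe : q = -c := eq_neg_of_add_eq_zero_left hqc
        have h4 : pact M.τ⁻¹ q = h := by rw [hq, t'_t M hh0]
        rw [← h4, hqe, t'_neg M hs hc]
      · rw [CC_apply, (tau_inv_some M hqc).1, alphaPerm_some] at e1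
        have := M.τ.injective (e1.trans (M.τ_inf).symm)
        simp at this
  rw [hgh', hg, hh]

lemma mu_inv {c : U} (hc : c ≠ 0) : (M.μ c)⁻¹ = M.μ (-c) := by
  have hneg : (-c : U) ≠ 0 := neg_ne_zero.mpr hc
  rw [mu_W M hs hc, mu_W M hs hneg, t'_neg M hs hc, neg_neg]
  simp only [mul_inv_rev, CC_inv, alphaPerm_inv, neg_neg]
  group

omit hs in
lemma M1 {c b : U} (hc : c ≠ 0) (hb : b ≠ 0) :
    M.μ c * alphaPerm b * (M.μ c)⁻¹ = M.CC (pact M.τ⁻¹ (pact (M.μ c) b)) := by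
  obtain ⟨e, he⟩ := M.moufang₁ c hc b
  have he' : M.μ c * alphaPerm b * (M.μ c)⁻¹ = M.CC e := he
  have h1 : (M.μ c * alphaPerm b * (M.μ c)⁻¹) none = some (pact (M.μ c) b) := by
    have hinv : (M.μ c)⁻¹ none = some 0 := by
      rw [Equiv.Perm.inv_def, Equiv.symm_apply_eq]; exact (M.μ_zero c hc).symm
    simp [Equiv.Perm.mul_apply, hinv, (mu_some M hc hb).1]
  rw [he'] at h1
  have hfb := (mu_some M hc hb).2
  by_cases he0 : e = 0
  · rw [he0] at h1; simp at h1
  · rw [CC_none, (tau_some M he0).1] at h1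
    have h2 : pact M.τ e = pact (M.μ c) b := by simpa using h1
    rw [he', ← h2, t'_t M he0]

omit hs in
lemma M2 {c b : U} (hc : c ≠ 0) (hb : b ≠ 0) :
    M.μ c * M.CC b * (M.μ c)⁻¹ = alphaPerm (pact (M.μ c) (pact M.τ b)) := by
  obtain ⟨e, he⟩ := M.moufang₂ c hc b
  have he' : M.μ c * M.CC b * (M.μ c)⁻¹ = alphaPerm e := he
  have h1 : (M.μ c * M.CC b * (M.μ c)⁻¹) (some 0) = some (pact (M.μ c) (pact M.τ b)) := by
    have hinv : (M.μ c)⁻¹ (some 0) = none := by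
      rw [Equiv.Perm.inv_def, Equiv.symm_apply_eq]; exact (M.μ_inf c hc).symm
    have htb := (tau_some M hb)
    simp [Equiv.Perm.mul_apply, hinv, CC_none, htb.1, (mu_some M hc htb.2).1]
  rw [he'] at h1
  simp only [alphaPerm_some, zero_add] at h1
  rw [he']
  exact congrArg alphaPerm (by simpa using h1)

lemma f_self {c : U} (hc : c ≠ 0) : pact (M.μ c) c = -c := by
  have hp := tau_inv_some M hc
  set p := pact M.τ⁻¹ c with hpd
  have hpne : -p ≠ 0 := neg_ne_zero.mpr hp.2
  have s1 : M.CC (-p) (some c) = none := by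
    rw [CC_apply, hp.1, alphaPerm_some, show p + -p = (0:U) by abel, M.τ_zero]
  have s2 : M.CC (-p) none = some (-c) := by
    rw [CC_none, (tau_some M hpne).1, t_neg M hs hp.2, hpd, t_t' M hc]
  apply pact_eq
  rw [mu_W M hs hc]
  simp only [Equiv.Perm.mul_apply]
  rw [← hpd, s1, alphaPerm_none, s2]

omit hs in
lemma F_neg {c b : U} (hc : c ≠ 0) (hb : b ≠ 0) :
    pact M.τ⁻¹ (pact (M.μ c) (-b)) = -pact M.τ⁻¹ (pact (M.μ c) b) := by
  have hM1 := M1 M hc hb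
  have hnb : (-b : U) ≠ 0 := neg_ne_zero.mpr hb
  have hfnb := mu_some M hc hnb
  have lhs : (M.μ c * alphaPerm b * (M.μ c)⁻¹) (some (pact (M.μ c) (-b))) = none := by
    have hinv : (M.μ c)⁻¹ (some (pact (M.μ c) (-b))) = some (-b) := by
      rw [Equiv.Perm.inv_def, Equiv.symm_apply_eq]; exact hfnb.1.symm
    simp [Equiv.Perm.mul_apply, hinv, show -b + b = (0:U) by abel, M.μ_zero c hc]
  rw [hM1, CC_apply, (tau_inv_some M hfnb.2).1, alphaPerm_some] at lhs
  by_cases hz : pact M.τ⁻¹ (pact (M.μ c) (-b)) + pact M.τ⁻¹ (pact (M.μ c) b) = 0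
  · exact eq_neg_of_add_eq_zero_left hz
  · rw [(tau_some M hz).1] at lhs; simp at lhs

lemma f_neg {c b : U} (hc : c ≠ 0) (hb : b ≠ 0) :
    pact (M.μ c) (-b) = -pact (M.μ c) b := by
  have h2 := (mu_some M hc hb).2
  have h3 := (mu_some M hc (neg_ne_zero.mpr hb)).2
  have h5 := congrArg (pact M.τ) (F_neg M hc hb)
  rw [t_neg M hs (tau_inv_some M h2).2, t_t' M h3, t_t' M h2] at h5
  exact h5

end WithSpecial

def negPerm : Equiv.Perm (Option U) := Equiv.optionCongr (Equiv.neg U)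

@[simp] lemma negPerm_some (x : U) : (negPerm : Equiv.Perm (Option U)) (some x) = some (-x) := rfl
@[simp] lemma negPerm_none : (negPerm : Equiv.Perm (Option U)) none = none := rfl

@[simp] lemma negPerm_mul_cancel (g : Equiv.Perm (Option U)) :
    (negPerm : Equiv.Perm (Option U)) * (negPerm * g) = g := by
  have : (negPerm : Equiv.Perm (Option U)) * negPerm = 1 := by
    apply Equiv.ext; intro u; cases u <;> simp [Equiv.Perm.mul_apply]
  rw [← mul_assoc, this, one_mul]

lemma neg_conj_alpha (x : U) :
    (negPerm : Equiv.Perm (Option U)) * alphaPerm x * negPerm = alphaPerm (-x) := by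
  apply Equiv.ext; intro u
  cases u <;> simp [Equiv.Perm.mul_apply] <;> abel

section WithSpecial2
variable (hs : M.Special)
include hs

lemma neg_comm_tau : (negPerm : Equiv.Perm (Option U)) * M.τ = M.τ * negPerm := by
  apply Equiv.ext; intro u
  match u with
  | none => simp [Equiv.Perm.mul_apply, M.τ_inf]
  | some x =>
    by_cases hx : x = 0
    · simp [hx, Equiv.Perm.mul_apply, M.τ_zero]
    · have hnx : (-x : U) ≠ 0 := neg_ne_zero.mpr hx
      simp only [Equiv.Perm.mul_apply, negPerm_some, (tau_some M hx).1, (tau_some M hnx).1,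
        t_neg M hs hx]

lemma neg_comm_tau_inv : (negPerm : Equiv.Perm (Option U)) * M.τ⁻¹ = M.τ⁻¹ * negPerm := by
  have h := neg_comm_tau M hs
  have h2 := congrArg (fun g => M.τ⁻¹ * g * M.τ⁻¹) h
  simpa [mul_assoc] using h2.symm

lemma neg_conj_CC (g : U) :
    (negPerm : Equiv.Perm (Option U)) * M.CC g * negPerm = M.CC (-g) := by
  unfold MoufangSet.CC
  calc (negPerm : Equiv.Perm (Option U)) * (M.τ * alphaPerm g * M.τ⁻¹) * negPerm
      = M.τ * (negPerm * alphaPerm g * negPerm) * M.τ⁻¹ := by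
        rw [show (negPerm : Equiv.Perm (Option U)) * (M.τ * alphaPerm g * M.τ⁻¹) * negPerm
            = (negPerm * M.τ) * alphaPerm g * (M.τ⁻¹ * negPerm) by group,
          neg_comm_tau M hs, ← neg_comm_tau_inv M hs]
        group
    _ = M.τ * alphaPerm (-g) * M.τ⁻¹ := by rw [neg_conj_alpha]

lemma mu_neg {c : U} (hc : c ≠ 0) : M.μ (-c) = M.μ c := by
  have hnc : (-c : U) ≠ 0 := neg_ne_zero.mpr hc
  have key : M.μ (-c) = negPerm * M.μ c * negPerm := by
    rw [mu_W M hs hc, mu_W M hs hnc, t'_neg M hs hc, neg_neg]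
    calc M.CC (pact M.τ⁻¹ c) * alphaPerm (-c) * M.CC (pact M.τ⁻¹ c)
        = (negPerm * M.CC (-pact M.τ⁻¹ c) * negPerm) * (negPerm * alphaPerm c * negPerm) *
            (negPerm * M.CC (-pact M.τ⁻¹ c) * negPerm) := by
          rw [neg_conj_CC M hs, neg_conj_alpha, neg_neg]
      _ = negPerm * (M.CC (-pact M.τ⁻¹ c) * alphaPerm c * M.CC (-pact M.τ⁻¹ c)) * negPerm := by
          simp only [mul_assoc, negPerm_mul_cancel]
  apply Equiv.ext
  intro u
  rw [key]
  match u with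
  | none =>
    simp only [Equiv.Perm.mul_apply, negPerm_none, M.μ_inf c hc, negPerm_some, neg_zero]
  | some x =>
    by_cases hx : x = 0
    · simp only [hx, Equiv.Perm.mul_apply, negPerm_some, neg_zero, M.μ_zero c hc, negPerm_none]
    · have hnx : (-x : U) ≠ 0 := neg_ne_zero.mpr hx
      simp only [Equiv.Perm.mul_apply, negPerm_some, (mu_some M hc hnx).1,
        f_neg M hs hc hx, neg_neg, (mu_some M hc hx).1]

/-- every `μ_c` is an involution. -/
lemma mu_sq {c : U} (hc : c ≠ 0) : M.μ c * M.μ c = 1 := by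
  have h : (M.μ c)⁻¹ = M.μ c := by rw [mu_inv M hs hc, mu_neg M hs hc]
  rw [show M.μ c * M.μ c = M.μ c * (M.μ c)⁻¹ by rw [h], mul_inv_cancel]

lemma conj_mu_opp {w v : U} (hw : w ≠ 0) (hv : v ≠ 0) :
    M.μ w * M.μ v * (M.μ w)⁻¹ =
      alphaPerm (-pact (M.μ w) v) * M.CC (pact M.τ⁻¹ (pact (M.μ w) v)) *
        alphaPerm (-pact (M.μ w) v) := by
  have hp := (tau_inv_some M hv).2
  have hnp : -pact M.τ⁻¹ v ≠ 0 := neg_ne_zero.mpr hp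
  have hM2 := M2 M hw hnp
  have ht : pact M.τ (-pact M.τ⁻¹ v) = -v := by rw [t_neg M hs hp, t_t' M hv]
  rw [ht, f_neg M hs hw hv] at hM2
  have hM1 := M1 M hw hv
  calc M.μ w * M.μ v * (M.μ w)⁻¹
      = (M.μ w * M.CC (-pact M.τ⁻¹ v) * (M.μ w)⁻¹) * (M.μ w * alphaPerm v * (M.μ w)⁻¹) *
        (M.μ w * M.CC (-pact M.τ⁻¹ v) * (M.μ w)⁻¹) := by rw [mu_W M hs hv]; group
    _ = _ := by rw [hM1, hM2]

/-- the opposite form of `μ_z`. -/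
lemma mu_opp {z : U} (hz : z ≠ 0) :
    M.μ z = alphaPerm (-z) * M.CC (pact M.τ⁻¹ z) * alphaPerm (-z) := by
  have hnz : (-z : U) ≠ 0 := neg_ne_zero.mpr hz
  have h := conj_mu_opp M hs hnz hnz
  rw [show M.μ (-z) * M.μ (-z) * (M.μ (-z))⁻¹ = M.μ (-z) by group, f_self M hs hnz, neg_neg,
    mu_neg M hs hz, neg_neg] at h
  exact h

lemma f_invol {c x : U} (hc : c ≠ 0) (hx : x ≠ 0) :
    pact (M.μ c) (pact (M.μ c) x) = x := by
  have h1 := (mu_some M hc hx).1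
  have h2 := (mu_some M hc (mu_some M hc hx).2).1
  have h3 : M.μ c (M.μ c (some x)) = some x := by
    have h4 := congrArg (fun g : Equiv.Perm (Option U) => g (some x)) (mu_sq M hs hc)
    simpa [Equiv.Perm.mul_apply] using h4
  rw [h1, h2] at h3
  exact Option.some.inj h3

lemma mu_a_inv {c : U} (hc : c ≠ 0) : (M.μ c)⁻¹ = M.μ c := by
  rw [mu_inv M hs hc, mu_neg M hs hc]

/-- conjugation identity: `μ_w μ_v μ_w⁻¹ = μ_{v·μ_w}`. -/
lemma mu_conj {w v : U} (hw : w ≠ 0) (hv : v ≠ 0) :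
    M.μ w * M.μ v * (M.μ w)⁻¹ = M.μ (pact (M.μ w) v) := by
  have hfv := (mu_some M hw hv).2
  rw [conj_mu_opp M hs hw hv, ← mu_opp M hs hfv]

end WithSpecial2
section VF
variable {F : Type*} [Field F]

open Classical in
/-- `ψ : U → F`, extending `φ` by zero. -/
noncomputable def psiF (V : AddSubgroup U) (φ : V ≃+ F) (u : U) : F :=
  if h : u ∈ V then φ ⟨u, h⟩ else 0

variable (V : AddSubgroup U) (φ : V ≃+ F)

lemma psiF_of_mem {u : U} (h : u ∈ V) : psiF V φ u = φ ⟨u, h⟩ := by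
  unfold psiF; rw [dif_pos h]

@[simp] lemma psiF_zero : psiF V φ 0 = 0 := by
  rw [psiF_of_mem V φ (zero_mem V), show (⟨0, zero_mem V⟩ : V) = 0 from rfl, map_zero]

lemma psiF_eq_zero {u : U} (h : u ∈ V) : psiF V φ u = 0 ↔ u = 0 := by
  constructor
  · intro hz
    rw [psiF_of_mem V φ h] at hz
    have h2 : (⟨u, h⟩ : V) = 0 := by
      apply φ.injective; rw [hz, map_zero]
    exact congrArg Subtype.val h2
  · intro hz; subst hz; exact psiF_zero V φ

lemma psiF_inj {u w : U} (hu : u ∈ V) (hw : w ∈ V)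
    (h : psiF V φ u = psiF V φ w) : u = w := by
  rw [psiF_of_mem V φ hu, psiF_of_mem V φ hw] at h
  exact congrArg Subtype.val (φ.injective h)

lemma psiF_neg {u : U} (hu : u ∈ V) : psiF V φ (-u) = -psiF V φ u := by
  rw [psiF_of_mem V φ (neg_mem hu), psiF_of_mem V φ hu,
    show (⟨-u, neg_mem hu⟩ : V) = -⟨u, hu⟩ from rfl, map_neg]

lemma psiF_add {u w : U} (hu : u ∈ V) (hw : w ∈ V) :
    psiF V φ (u + w) = psiF V φ u + psiF V φ w := by
  rw [psiF_of_mem V φ (add_mem hu hw), psiF_of_mem V φ hu, psiF_of_mem V φ hw,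
    show (⟨u + w, add_mem hu hw⟩ : V) = ⟨u, hu⟩ + ⟨w, hw⟩ from rfl, map_add]

/-- the inverse of ψ -/
noncomputable def psiInv (V : AddSubgroup U) (φ : V ≃+ F) (r : F) : U := ((φ.symm r : V) : U)

lemma psiInv_mem (r : F) : psiInv V φ r ∈ V := (φ.symm r).2

lemma psiF_psiInv (r : F) : psiF V φ (psiInv V φ r) = r := by
  rw [psiF_of_mem V φ (psiInv_mem V φ r)]
  have : (⟨psiInv V φ r, psiInv_mem V φ r⟩ : V) = φ.symm r := rfl
  rw [this, AddEquiv.apply_symm_apply]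

lemma psiInv_psiF {u : U} (hu : u ∈ V) : psiInv V φ (psiF V φ u) = u := by
  rw [psiF_of_mem V φ hu]
  unfold psiInv
  rw [AddEquiv.symm_apply_apply]

lemma psiInv_neg (r : F) : psiInv V φ (-r) = -psiInv V φ r := by
  unfold psiInv
  rw [map_neg]
  rfl

lemma psiInv_ne_zero {r : F} (hr : r ≠ 0) : psiInv V φ r ≠ 0 := by
  intro h
  apply hr
  rw [← psiF_psiInv V φ r, h, psiF_zero]

end VF

section MVF
variable {F : Type*} [Field F]
variable (M : MoufangSet U) (hs : M.Special)
variable (V : AddSubgroup U) (φ : V ≃+ F) (a : U) (haV : a ∈ V) (ha : a ≠ 0)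
variable (hroot : ∀ v : U, v ∈ V → v ≠ 0 → pact (M.μ a) v ∈ V)
variable (hφ : ∀ v w : V, (v : U) ≠ 0 → (w : U) = pact (M.μ a) (v : U) → φ w = -(φ v)⁻¹)

include hroot hφ in
lemma fa_V {v : U} (hv : v ∈ V) (hv0 : v ≠ 0) :
    pact (M.μ a) v ∈ V ∧ pact (M.μ a) v ≠ 0 ∧ psiF V φ (pact (M.μ a) v) = -(psiF V φ v)⁻¹ := by
  have hm := hroot v hv hv0
  have heq := hφ ⟨v, hv⟩ ⟨pact (M.μ a) v, hm⟩ hv0 rfl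
  have hψ : psiF V φ (pact (M.μ a) v) = -(psiF V φ v)⁻¹ := by
    rw [psiF_of_mem V φ hm, psiF_of_mem V φ hv, heq]
  refine ⟨hm, ?_, hψ⟩
  intro h0
  rw [h0, psiF_zero] at hψ
  have h1 : psiF V φ v ≠ 0 := fun hz => hv0 ((psiF_eq_zero V φ hv).mp hz)
  exact h1 (inv_eq_zero.mp (neg_eq_zero.mp hψ.symm))

include hs in
/-- The `μ_a`-based form of `μ_v`. -/
lemma mu_m {v : U} (ha : a ≠ 0) (hv : v ≠ 0) :
    M.μ v = (M.μ a * alphaPerm (-pact (M.μ a) v) * (M.μ a)⁻¹) * alphaPerm v *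
            (M.μ a * alphaPerm (-pact (M.μ a) v) * (M.μ a)⁻¹) := by
  have hainv : (M.μ a)⁻¹ = M.μ a := mu_a_inv M hs ha
  have hfv := mu_some M ha hv
  have hg0 : -pact (M.μ a) v ≠ 0 := neg_ne_zero.mpr hfv.2
  have hfg : pact (M.μ a) (-pact (M.μ a) v) = -v := by
    rw [f_neg M hs ha hfv.2, f_invol M hs ha hv]
  have inv_pt : ∀ u, (M.μ a)⁻¹ u = M.μ a u := fun u => by rw [hainv]
  have hM1 : M.μ a * alphaPerm (-pact (M.μ a) v) * (M.μ a)⁻¹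
      = M.τ * alphaPerm (pact M.τ⁻¹ (pact (M.μ a) (-pact (M.μ a) v))) * M.τ⁻¹ :=
    M1 M ha hg0
  apply (M.μ_unique v hv _ ?_ ?_ ?_).symm
  · exact ⟨pact M.τ⁻¹ (pact (M.μ a) (-pact (M.μ a) v)), pact M.τ⁻¹ (pact (M.μ a) (-pact (M.μ a) v)),
      by rw [← hM1]⟩
  · -- at none
    simp only [Equiv.Perm.mul_apply, inv_pt]
    rw [M.μ_inf a ha, alphaPerm_some, zero_add, (mu_some M ha hg0).1, hfg, alphaPerm_some,
      show -v + v = (0:U) by abel, M.μ_zero a ha, alphaPerm_none, M.μ_inf a ha]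
  · -- at some 0
    simp only [Equiv.Perm.mul_apply, inv_pt]
    rw [M.μ_zero a ha, alphaPerm_none, M.μ_inf a ha, alphaPerm_some, zero_add,
      (mu_some M ha hv).1, alphaPerm_some, show pact (M.μ a) v + -pact (M.μ a) v = (0:U) by abel,
      M.μ_zero a ha]

include hs ha hroot hφ in
/-- The action of `μ_v` on `V` via `ψ`. -/
lemma f_V {v x : U} (hv : v ∈ V) (hv0 : v ≠ 0) (hx : x ∈ V) (hx0 : x ≠ 0) :
    pact (M.μ v) x ∈ V ∧ pact (M.μ v) x ≠ 0 ∧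
      psiF V φ (pact (M.μ v) x) = -(psiF V φ v) ^ 2 * (psiF V φ x)⁻¹ := by
  have hs0 : psiF V φ v ≠ 0 := fun hz => hv0 ((psiF_eq_zero V φ hv).mp hz)
  have hr0 : psiF V φ x ≠ 0 := fun hz => hx0 ((psiF_eq_zero V φ hx).mp hz)
  by_cases hxv : x = v
  · subst hxv
    rw [f_self M hs hv0]
    refine ⟨neg_mem hv, neg_ne_zero.mpr hv0, ?_⟩
    rw [psiF_neg V φ hv]
    field_simp
  · -- F-side abbreviations
    have hrs : psiF V φ x - psiF V φ v ≠ 0 :=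
      sub_ne_zero.mpr (fun h => hxv (psiF_inj V φ hx hv h))
    have hA : -(psiF V φ x)⁻¹ + (psiF V φ v)⁻¹
        = (psiF V φ x - psiF V φ v) * (psiF V φ x * psiF V φ v)⁻¹ := by
      field_simp
      ring
    have hA0 : -(psiF V φ x)⁻¹ + (psiF V φ v)⁻¹ ≠ 0 := by
      rw [hA]
      exact mul_ne_zero hrs (inv_ne_zero (mul_ne_zero hr0 hs0))
    have hB : -(-(psiF V φ x)⁻¹ + (psiF V φ v)⁻¹)⁻¹ + psiF V φ v
        = -(psiF V φ v) ^ 2 * (psiF V φ x - psiF V φ v)⁻¹ := by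
      rw [hA]
      field_simp
      ring
    have hB0 : -(-(psiF V φ x)⁻¹ + (psiF V φ v)⁻¹)⁻¹ + psiF V φ v ≠ 0 := by
      rw [hB]
      exact mul_ne_zero (neg_ne_zero.mpr (pow_ne_zero 2 hs0)) (inv_ne_zero hrs)
    have hC : -(-(-(psiF V φ x)⁻¹ + (psiF V φ v)⁻¹)⁻¹ + psiF V φ v)⁻¹ + (psiF V φ v)⁻¹
        = psiF V φ x * ((psiF V φ v) ^ 2)⁻¹ := by
      rw [hB]
      field_simp
      ring
    have hC0 : -(-(-(psiF V φ x)⁻¹ + (psiF V φ v)⁻¹)⁻¹ + psiF V φ v)⁻¹ + (psiF V φ v)⁻¹ ≠ 0 := by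
      rw [hC]
      exact mul_ne_zero hr0 (inv_ne_zero (pow_ne_zero 2 hs0))
    -- chain of evaluations through μ_a
    obtain ⟨hy1V, hy1ne, hy1ψ⟩ := fa_V M V φ a hroot hφ hx hx0
    obtain ⟨hwV, hwne, hwψ⟩ := fa_V M V φ a hroot hφ hv hv0
    have hy2V : pact (M.μ a) x + -pact (M.μ a) v ∈ V := add_mem hy1V (neg_mem hwV)
    have hy2ψ : psiF V φ (pact (M.μ a) x + -pact (M.μ a) v)
        = -(psiF V φ x)⁻¹ + (psiF V φ v)⁻¹ := by
      rw [psiF_add V φ hy1V (neg_mem hwV), psiF_neg V φ hwV, hy1ψ, hwψ]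
      ring
    have hy2ne : pact (M.μ a) x + -pact (M.μ a) v ≠ 0 := fun h => by
      rw [h, psiF_zero] at hy2ψ
      exact hA0 hy2ψ.symm
    obtain ⟨hy3V, hy3ne, hy3ψ⟩ := fa_V M V φ a hroot hφ hy2V hy2ne
    rw [hy2ψ] at hy3ψ
    have hy4V : pact (M.μ a) (pact (M.μ a) x + -pact (M.μ a) v) + v ∈ V := add_mem hy3V hv
    have hy4ψ : psiF V φ (pact (M.μ a) (pact (M.μ a) x + -pact (M.μ a) v) + v)
        = -(-(psiF V φ x)⁻¹ + (psiF V φ v)⁻¹)⁻¹ + psiF V φ v := by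
      rw [psiF_add V φ hy3V hv, hy3ψ]
    have hy4ne : pact (M.μ a) (pact (M.μ a) x + -pact (M.μ a) v) + v ≠ 0 := fun h => by
      rw [h, psiF_zero] at hy4ψ
      exact hB0 hy4ψ.symm
    obtain ⟨hy5V, hy5ne, hy5ψ⟩ := fa_V M V φ a hroot hφ hy4V hy4ne
    rw [hy4ψ] at hy5ψ
    have hy6V : pact (M.μ a) (pact (M.μ a) (pact (M.μ a) x + -pact (M.μ a) v) + v)
        + -pact (M.μ a) v ∈ V := add_mem hy5V (neg_mem hwV)
    have hy6ψ : psiF V φ (pact (M.μ a) (pact (M.μ a) (pact (M.μ a) x + -pact (M.μ a) v) + v)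
        + -pact (M.μ a) v)
        = -(-(-(psiF V φ x)⁻¹ + (psiF V φ v)⁻¹)⁻¹ + psiF V φ v)⁻¹ + (psiF V φ v)⁻¹ := by
      rw [psiF_add V φ hy5V (neg_mem hwV), psiF_neg V φ hwV, hy5ψ, hwψ]
      ring
    have hy6ne : pact (M.μ a) (pact (M.μ a) (pact (M.μ a) x + -pact (M.μ a) v) + v)
        + -pact (M.μ a) v ≠ 0 := fun h => by
      rw [h, psiF_zero] at hy6ψ
      exact hC0 hy6ψ.symm
    obtain ⟨hy7V, hy7ne, hy7ψ⟩ := fa_V M V φ a hroot hφ hy6V hy6ne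
    rw [hy6ψ, hC] at hy7ψ
    have happ : pact (M.μ v) x =
        pact (M.μ a) (pact (M.μ a) (pact (M.μ a) (pact (M.μ a) x + -pact (M.μ a) v) + v)
          + -pact (M.μ a) v) := by
      apply pact_eq
      rw [mu_m M hs a ha hv0]
      simp only [Equiv.Perm.mul_apply, mu_a_inv M hs ha]
      rw [(mu_some M ha hx0).1, alphaPerm_some, (mu_some M ha hy2ne).1, alphaPerm_some,
        (mu_some M ha hy4ne).1, alphaPerm_some, (mu_some M ha hy6ne).1]
    rw [happ]
    refine ⟨hy7V, hy7ne, ?_⟩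
    rw [hy7ψ]
    field_simp

/-- the generating set of `H₀`. -/
def genSet (M : MoufangSet U) (V : AddSubgroup U) : Set (Equiv.Perm (Option U)) :=
  {g | ∃ b c : U, b ∈ V ∧ b ≠ 0 ∧ c ∈ V ∧ c ≠ 0 ∧ g = M.μ c * M.μ b}

/-- the bundle of properties of elements of `H₀`. -/
def Good (g : Equiv.Perm (Option U)) : Prop :=
  g none = none ∧ g (some 0) = some 0 ∧
  (∀ x : U, x ∈ V → g (some x) = some (pact g x) ∧ pact g x ∈ V) ∧
  (∃ s : F, s ≠ 0 ∧ IsSquare s ∧ ∀ x : U, x ∈ V → psiF V φ (pact g x) = s * psiF V φ x) ∧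
  (∀ x : U, x ∈ V → x ≠ 0 → g * M.μ x * g⁻¹ = M.μ (pact g x))

include hs ha hroot hφ in
lemma good_of_mem {g : Equiv.Perm (Option U)} (hg : g ∈ Subgroup.closure (genSet M V)) :
    Good M V φ g := by
  induction hg using Subgroup.closure_induction with
  | mem g hgen =>
    obtain ⟨b, c, hbV, hb0, hcV, hc0, rfl⟩ := hgen
    have key : ∀ x : U, x ∈ V → (M.μ c * M.μ b) (some x) = some (pact (M.μ c * M.μ b) x) ∧
        pact (M.μ c * M.μ b) x ∈ V ∧
        psiF V φ (pact (M.μ c * M.μ b) x)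
          = ((psiF V φ c) ^ 2 * ((psiF V φ b) ^ 2)⁻¹) * psiF V φ x ∧
        (x ≠ 0 → pact (M.μ c * M.μ b) x = pact (M.μ c) (pact (M.μ b) x)) := by
      intro x hxV
      by_cases hx0 : x = 0
      · subst hx0
        have h0 : (M.μ c * M.μ b) (some 0) = some 0 := by
          rw [Equiv.Perm.mul_apply, M.μ_zero b hb0, M.μ_inf c hc0]
        have hp : pact (M.μ c * M.μ b) 0 = 0 := pact_eq h0
        refine ⟨by rw [h0, hp], by rw [hp]; exact zero_mem V, by rw [hp]; simp, fun h => absurd rfl h⟩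
      · obtain ⟨h1V, h1ne, h1ψ⟩ := f_V M hs V φ a ha hroot hφ hbV hb0 hxV hx0
        obtain ⟨h2V, h2ne, h2ψ⟩ := f_V M hs V φ a ha hroot hφ hcV hc0 h1V h1ne
        have happ : (M.μ c * M.μ b) (some x) = some (pact (M.μ c) (pact (M.μ b) x)) := by
          rw [Equiv.Perm.mul_apply, (mu_some M hb0 hx0).1, (mu_some M hc0 h1ne).1]
        have hp := pact_eq happ
        refine ⟨by rw [happ, hp], by rw [hp]; exact h2V, ?_, fun _ => hp⟩
        rw [hp, h2ψ, h1ψ]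
        have hbψ : psiF V φ b ≠ 0 := fun hz => hb0 ((psiF_eq_zero V φ hbV).mp hz)
        have hxψ : psiF V φ x ≠ 0 := fun hz => hx0 ((psiF_eq_zero V φ hxV).mp hz)
        field_simp
    refine ⟨?_, ?_, fun x hx => ⟨(key x hx).1, (key x hx).2.1⟩, ?_, ?_⟩
    · rw [Equiv.Perm.mul_apply, M.μ_inf b hb0, M.μ_zero c hc0]
    · rw [Equiv.Perm.mul_apply, M.μ_zero b hb0, M.μ_inf c hc0]
    · have hbψ : psiF V φ b ≠ 0 := fun hz => hb0 ((psiF_eq_zero V φ hbV).mp hz)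
      have hcψ : psiF V φ c ≠ 0 := fun hz => hc0 ((psiF_eq_zero V φ hcV).mp hz)
      refine ⟨(psiF V φ c) ^ 2 * ((psiF V φ b) ^ 2)⁻¹,
        mul_ne_zero (pow_ne_zero 2 hcψ) (inv_ne_zero (pow_ne_zero 2 hbψ)),
        ⟨psiF V φ c * (psiF V φ b)⁻¹, by field_simp⟩,
        fun x hx => (key x hx).2.2.1⟩
    · intro x hxV hx0
      obtain ⟨h1V, h1ne, h1ψ⟩ := f_V M hs V φ a ha hroot hφ hbV hb0 hxV hx0
      rw [(key x hxV).2.2.2 hx0]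
      rw [show M.μ c * M.μ b * M.μ x * (M.μ c * M.μ b)⁻¹
          = M.μ c * (M.μ b * M.μ x * (M.μ b)⁻¹) * (M.μ c)⁻¹ by group]
      rw [mu_conj M hs hb0 hx0, mu_conj M hs hc0 h1ne]
  | one =>
    refine ⟨rfl, rfl, fun x hx => ⟨rfl, hx⟩, ⟨1, one_ne_zero, IsSquare.one, fun x hx => by
      rw [show pact 1 x = x from rfl, one_mul]⟩, fun x hx hx0 => by
      rw [show pact 1 x = x from rfl]; group⟩
  | mul g₁ g₂ hg₁ hg₂ ih₁ ih₂ =>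
    obtain ⟨h₁none, h₁zero, h₁V, ⟨s₁, hs₁0, hs₁sq, hs₁⟩, h₁conj⟩ := ih₁
    obtain ⟨h₂none, h₂zero, h₂V, ⟨s₂, hs₂0, hs₂sq, hs₂⟩, h₂conj⟩ := ih₂
    have key : ∀ x : U, x ∈ V → (g₁ * g₂) (some x) = some (pact g₁ (pact g₂ x)) := by
      intro x hx
      rw [Equiv.Perm.mul_apply, (h₂V x hx).1, (h₁V _ (h₂V x hx).2).1]
    have hp : ∀ x : U, x ∈ V → pact (g₁ * g₂) x = pact g₁ (pact g₂ x) :=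
      fun x hx => pact_eq (key x hx)
    refine ⟨?_, ?_, fun x hx => ⟨by rw [key x hx, hp x hx], by
        rw [hp x hx]; exact (h₁V _ (h₂V x hx).2).2⟩,
      ⟨s₁ * s₂, mul_ne_zero hs₁0 hs₂0, hs₁sq.mul hs₂sq, fun x hx => by
        rw [hp x hx, hs₁ _ (h₂V x hx).2, hs₂ x hx]; ring⟩, ?_⟩
    · rw [Equiv.Perm.mul_apply, h₂none, h₁none]
    · rw [Equiv.Perm.mul_apply, h₂zero, h₁zero]
    · intro x hxV hx0
      have h2ne : pact g₂ x ≠ 0 := by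
        intro hz
        have := hs₂ x hxV
        rw [hz, psiF_zero] at this
        exact (fun hxx => hx0 ((psiF_eq_zero V φ hxV).mp hxx))
          ((mul_eq_zero.mp this.symm).resolve_left hs₂0)
      rw [hp x hxV]
      rw [show g₁ * g₂ * M.μ x * (g₁ * g₂)⁻¹ = g₁ * (g₂ * M.μ x * g₂⁻¹) * g₁⁻¹ by group]
      rw [h₂conj x hxV hx0, h₁conj _ (h₂V x hxV).2 h2ne]
  | inv g hg ih =>
    obtain ⟨hnone, hzero, hV, ⟨s, hs0, hssq, hsψ⟩, hconj⟩ := ih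
    have hsurj : ∀ x : U, x ∈ V → pact g (psiInv V φ (s⁻¹ * psiF V φ x)) = x := by
      intro x hx
      apply psiF_inj V φ (hV _ (psiInv_mem V φ _)).2 hx
      rw [hsψ _ (psiInv_mem V φ _), psiF_psiInv]
      field_simp
    have hkey : ∀ x : U, x ∈ V → g⁻¹ (some x) = some (psiInv V φ (s⁻¹ * psiF V φ x)) := by
      intro x hx
      have h1 := (hV _ (psiInv_mem V φ (s⁻¹ * psiF V φ x))).1
      rw [hsurj x hx] at h1
      rw [← h1, ← Equiv.Perm.mul_apply, inv_mul_cancel, Equiv.Perm.one_apply]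
    refine ⟨?_, ?_, fun x hx => ⟨by rw [hkey x hx, pact_eq (hkey x hx)], by
        rw [pact_eq (hkey x hx)]; exact psiInv_mem V φ _⟩,
      ⟨s⁻¹, inv_ne_zero hs0, hssq.inv, fun x hx => by
        rw [pact_eq (hkey x hx), psiF_psiInv]⟩, ?_⟩
    · rw [Equiv.Perm.inv_def, Equiv.symm_apply_eq]; exact hnone.symm
    · rw [Equiv.Perm.inv_def, Equiv.symm_apply_eq]; exact hzero.symm
    · intro x hxV hx0
      have hyV := psiInv_mem V φ (s⁻¹ * psiF V φ x)
      have hy0 : psiInv V φ (s⁻¹ * psiF V φ x) ≠ 0 :=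
        psiInv_ne_zero V φ
          (mul_ne_zero (inv_ne_zero hs0) (fun hz => hx0 ((psiF_eq_zero V φ hxV).mp hz)))
      have h2 := hconj _ hyV hy0
      rw [hsurj x hxV] at h2
      rw [pact_eq (hkey x hxV), ← h2]
      group

/-- the scalar by which `g ∈ H₀` acts on `V`. -/
noncomputable def theta (g : Equiv.Perm (Option U)) : F :=
  psiF V φ (pact g a) * (psiF V φ a)⁻¹

include hs haV ha hroot hφ in
lemma theta_spec {g : Equiv.Perm (Option U)} (hg : g ∈ Subgroup.closure (genSet M V)) :
    theta V φ a g ≠ 0 ∧ IsSquare (theta V φ a g) ∧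
    (∀ x : U, x ∈ V → pact g x ∈ V ∧ g (some x) = some (pact g x) ∧
      psiF V φ (pact g x) = theta V φ a g * psiF V φ x) ∧
    (∀ x : U, x ∈ V → x ≠ 0 → g * M.μ x * g⁻¹ = M.μ (pact g x)) ∧
    g none = none ∧ g (some 0) = some 0 := by
  obtain ⟨hnone, hzero, hV, ⟨s, hs0, hssq, hsψ⟩, hconj⟩ := good_of_mem M hs V φ a ha hroot hφ hg
  have haψ : psiF V φ a ≠ 0 := fun hz => ha ((psiF_eq_zero V φ haV).mp hz)
  have hth : theta V φ a g = s := by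
    unfold theta; rw [hsψ a haV]; field_simp
  rw [hth]
  exact ⟨hs0, hssq, fun x hx => ⟨(hV x hx).2, (hV x hx).1, hsψ x hx⟩, hconj, hnone, hzero⟩

/-- `Θ : H₀ → Fˣ`. -/
noncomputable def Theta (hs : M.Special) (haV : a ∈ V) (ha : a ≠ 0)
    (hroot : ∀ v : U, v ∈ V → v ≠ 0 → pact (M.μ a) v ∈ V)
    (hφ : ∀ v w : V, (v : U) ≠ 0 → (w : U) = pact (M.μ a) (v : U) → φ w = -(φ v)⁻¹) :
    ↥(Subgroup.closure (genSet M V)) →* Fˣ where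
  toFun g := Units.mk0 (theta V φ a (g : Equiv.Perm (Option U)))
    (theta_spec M hs V φ a haV ha hroot hφ g.2).1
  map_one' := by
    have haψ : psiF V φ a ≠ 0 := fun hz => ha ((psiF_eq_zero V φ haV).mp hz)
    apply Units.ext
    show theta V φ a (1 : Equiv.Perm (Option U)) = 1
    unfold theta
    rw [show pact (1 : Equiv.Perm (Option U)) a = a from rfl]
    field_simp
  map_mul' g h := by
    have haψ : psiF V φ a ≠ 0 := fun hz => ha ((psiF_eq_zero V φ haV).mp hz)
    obtain ⟨hg0, _, hgV, _, _⟩ := theta_spec M hs V φ a haV ha hroot hφ g.2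
    obtain ⟨hh0, _, hhV, _, _⟩ := theta_spec M hs V φ a haV ha hroot hφ h.2
    apply Units.ext
    show theta V φ a _ = theta V φ a _ * theta V φ a _
    rw [show ((g * h : ↥(Subgroup.closure (genSet M V))) : Equiv.Perm (Option U))
      = (g : Equiv.Perm (Option U)) * (h : Equiv.Perm (Option U)) from rfl]
    have hp : pact ((g : Equiv.Perm (Option U)) * (h : Equiv.Perm (Option U))) a
        = pact (g : Equiv.Perm (Option U)) (pact (h : Equiv.Perm (Option U)) a) := by
      apply pact_eq
      rw [Equiv.Perm.mul_apply, (hhV a haV).2.1, (hgV _ (hhV a haV).1).2.1]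
    unfold theta
    rw [hp, (hgV _ (hhV a haV).1).2.2, (hhV a haV).2.2]
    field_simp
    rw [(hgV a haV).2.2]

include hs haV ha hroot hφ in
lemma comm_H [Fintype F] (g h : ↥(Subgroup.closure (genSet M V))) : g * h = h * g := by
  apply commutative_of_cyclic_center_quotient (Theta M V φ a hs haV ha hroot hφ)
  intro k hk
  rw [MonoidHom.mem_ker] at hk
  have hth : theta V φ a (k : Equiv.Perm (Option U)) = 1 := congrArg Units.val hk
  obtain ⟨_, _, hkV, hkconj, _, _⟩ := theta_spec M hs V φ a haV ha hroot hφ k.2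
  have hfix : ∀ x : U, x ∈ V → pact (k : Equiv.Perm (Option U)) x = x := by
    intro x hx
    apply psiF_inj V φ (hkV x hx).1 hx
    rw [(hkV x hx).2.2, hth, one_mul]
  rw [Subgroup.mem_center_iff]
  intro b
  obtain ⟨b, hb⟩ := b
  apply Subtype.ext
  show b * (k : Equiv.Perm (Option U)) = (k : Equiv.Perm (Option U)) * b
  have hcomm : ∀ x : U, x ∈ V → x ≠ 0 →
      (k : Equiv.Perm (Option U)) * M.μ x = M.μ x * (k : Equiv.Perm (Option U)) := by
    intro x hxV hx0
    have h1 := hkconj x hxV hx0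
    rw [hfix x hxV] at h1
    calc (k : Equiv.Perm (Option U)) * M.μ x
        = (k : Equiv.Perm (Option U)) * M.μ x * (k : Equiv.Perm (Option U))⁻¹ *
          (k : Equiv.Perm (Option U)) := by group
      _ = M.μ x * (k : Equiv.Perm (Option U)) := by rw [h1]
  induction hb using Subgroup.closure_induction with
  | mem w hw =>
    obtain ⟨b', c', hb'V, hb'0, hc'V, hc'0, rfl⟩ := hw
    rw [show M.μ c' * M.μ b' * (k : Equiv.Perm (Option U))
        = M.μ c' * (M.μ b' * (k : Equiv.Perm (Option U))) by group, ← hcomm b' hb'V hb'0,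
      show M.μ c' * ((k : Equiv.Perm (Option U)) * M.μ b')
        = (M.μ c' * (k : Equiv.Perm (Option U))) * M.μ b' by group, ← hcomm c' hc'V hc'0]
    group
  | one => group
  | mul u v hu hv ihu ihv =>
    rw [show u * v * (k : Equiv.Perm (Option U)) = u * (v * (k : Equiv.Perm (Option U))) by group,
      ihv, show u * ((k : Equiv.Perm (Option U)) * v) = (u * (k : Equiv.Perm (Option U))) * v
        by group, ihu]
    group
  | inv u hu ihu =>
    have : (k : Equiv.Perm (Option U)) * u = u * k := by
      calc (k : Equiv.Perm (Option U)) * u = u * (u⁻¹ * (k : Equiv.Perm (Option U)) * u) := by group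
        _ = u * (u⁻¹ * ((k : Equiv.Perm (Option U)) * u)) := by group
        _ = u * k := by rw [← ihu]; group
    calc u⁻¹ * (k : Equiv.Perm (Option U)) = u⁻¹ * ((k : Equiv.Perm (Option U)) * u) * u⁻¹ := by
          group
      _ = u⁻¹ * (u * (k : Equiv.Perm (Option U))) * u⁻¹ := by rw [this]
      _ = (k : Equiv.Perm (Option U)) * u⁻¹ := by group

include hs haV ha hroot hφ in
lemma scale [Fintype F] {s : F} (hs' : s ≠ 0) {x y : U} (hxV : x ∈ V) (hx0 : x ≠ 0)
    (hyV : y ∈ V) (hy0 : y ≠ 0) :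
    M.μ (psiInv V φ (s ^ 2 * psiF V φ x)) * M.μ (psiInv V φ (s ^ 2 * psiF V φ y))
      = M.μ x * M.μ y := by
  have hxψ : psiF V φ x ≠ 0 := fun hz => hx0 ((psiF_eq_zero V φ hxV).mp hz)
  have hyψ : psiF V φ y ≠ 0 := fun hz => hy0 ((psiF_eq_zero V φ hyV).mp hz)
  set p := psiInv V φ (s * psiF V φ x) with hpd
  have hpV : p ∈ V := psiInv_mem V φ _
  have hp0 : p ≠ 0 := psiInv_ne_zero V φ (mul_ne_zero hs' hxψ)
  have hpψ : psiF V φ p = s * psiF V φ x := psiF_psiInv V φ _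
  have hH : M.μ p * M.μ x ∈ Subgroup.closure (genSet M V) :=
    Subgroup.subset_closure ⟨x, p, hxV, hx0, hpV, hp0, rfl⟩
  have hG : M.μ x * M.μ y ∈ Subgroup.closure (genSet M V) :=
    Subgroup.subset_closure ⟨y, x, hyV, hy0, hxV, hx0, rfl⟩
  obtain ⟨_, _, _, hconj, _, _⟩ := theta_spec M hs V φ a haV ha hroot hφ hH
  have hev : ∀ z : U, z ∈ V → z ≠ 0 →
      pact (M.μ p * M.μ x) z = psiInv V φ (s ^ 2 * psiF V φ z) := by
    intro z hzV hz0
    obtain ⟨h1V, h1ne, h1ψ⟩ := f_V M hs V φ a ha hroot hφ hxV hx0 hzV hz0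
    obtain ⟨h2V, h2ne, h2ψ⟩ := f_V M hs V φ a ha hroot hφ hpV hp0 h1V h1ne
    have happ : pact (M.μ p * M.μ x) z = pact (M.μ p) (pact (M.μ x) z) := by
      apply pact_eq
      rw [Equiv.Perm.mul_apply, (mu_some M hx0 hz0).1, (mu_some M hp0 h1ne).1]
    rw [happ, ← psiInv_psiF V φ h2V, h2ψ, h1ψ, hpψ]
    congr 1
    have hzψ : psiF V φ z ≠ 0 := fun hz => hz0 ((psiF_eq_zero V φ hzV).mp hz)
    field_simp
  have e1 := hconj x hxV hx0
  have e2 := hconj y hyV hy0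
  rw [hev x hxV hx0] at e1
  rw [hev y hyV hy0] at e2
  have hcomm := comm_H M hs V φ a haV ha hroot hφ ⟨_, hH⟩ ⟨_, hG⟩
  have hcomm' : (M.μ p * M.μ x) * (M.μ x * M.μ y) = (M.μ x * M.μ y) * (M.μ p * M.μ x) :=
    congrArg Subtype.val hcomm
  rw [← e1, ← e2]
  calc M.μ p * M.μ x * M.μ x * (M.μ p * M.μ x)⁻¹ * (M.μ p * M.μ x * M.μ y * (M.μ p * M.μ x)⁻¹)
      = (M.μ p * M.μ x) * (M.μ x * M.μ y) * (M.μ p * M.μ x)⁻¹ := by group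
    _ = M.μ x * M.μ y := by rw [hcomm']; group

end MVF

section ClassLogic
variable {F : Type*} [Field F] [Fintype F]

lemma nonsquare_mul_inv_nonsquare {p q : F} (hp : p ≠ 0) (hq : q ≠ 0)
    (h1 : ¬IsSquare p) (h2 : ¬IsSquare q) : IsSquare (p * q⁻¹) := by
  obtain ⟨g, hg⟩ := IsCyclic.exists_generator (α := Fˣ)
  have sqF : ∀ (u : Fˣ) (i : ℤ), g ^ i = u → Even i → IsSquare (u : F) := by
    rintro u i hgi ⟨k, hk⟩
    refine ⟨((g ^ k : Fˣ) : F), ?_⟩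
    rw [← Units.val_mul, ← zpow_add, ← hk, hgi]
  obtain ⟨i, hi⟩ := Subgroup.mem_zpowers_iff.mp (hg (Units.mk0 p hp))
  obtain ⟨j, hj⟩ := Subgroup.mem_zpowers_iff.mp (hg (Units.mk0 q hq))
  have hio : ¬Even i := fun he => h1 (by simpa using sqF _ i hi he)
  have hjo : ¬Even j := fun he => h2 (by simpa using sqF _ j hj he)
  have hev : Even (i - j) := by
    rcases Int.even_or_odd i with h | h
    · exact absurd h hio
    rcases Int.even_or_odd j with h' | h'
    · exact absurd h' hjo
    exact h.sub_odd h'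
  have := sqF (Units.mk0 p hp * (Units.mk0 q hq)⁻¹) (i - j) (by rw [zpow_sub, hi, hj]) hev
  simpa using this

lemma pm_resolve {x y z : F} (hx : x ≠ 0) (hy : y ≠ 0) (hz : z ≠ 0)
    (h1 : ¬∃ s : F, s ≠ 0 ∧ (z = s ^ 2 * y ∨ z = -(s ^ 2 * y)))
    (h2 : ¬∃ s : F, s ≠ 0 ∧ (z = s ^ 2 * x ∨ z = -(s ^ 2 * x))) :
    ∃ s : F, s ≠ 0 ∧ (x = s ^ 2 * y ∨ x = -(s ^ 2 * y)) := by
  have k1 : ¬IsSquare (z * y⁻¹) := by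
    rintro ⟨t, ht⟩
    have ht0 : t ≠ 0 := by
      intro h0; rw [h0, mul_zero] at ht
      exact (mul_ne_zero hz (inv_ne_zero hy)) ht
    exact h1 ⟨t, ht0, Or.inl (by field_simp at ht ⊢; linear_combination ht)⟩
  have k2 : ¬IsSquare (z * x⁻¹) := by
    rintro ⟨t, ht⟩
    have ht0 : t ≠ 0 := by
      intro h0; rw [h0, mul_zero] at ht
      exact (mul_ne_zero hz (inv_ne_zero hx)) ht
    exact h2 ⟨t, ht0, Or.inl (by field_simp at ht ⊢; linear_combination ht)⟩
  have key := nonsquare_mul_inv_nonsquare (mul_ne_zero hz (inv_ne_zero hy))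
    (mul_ne_zero hz (inv_ne_zero hx)) k1 k2
  obtain ⟨t, ht⟩ := key
  have ht0 : t ≠ 0 := by
    intro h0; rw [h0, mul_zero] at ht
    exact (mul_ne_zero (mul_ne_zero hz (inv_ne_zero hy))
      (inv_ne_zero (mul_ne_zero hz (inv_ne_zero hx)))) ht
  refine ⟨t, ht0, Or.inl ?_⟩
  field_simp at ht
  have h' : x * z = t ^ 2 * y * z := by linear_combination z * ht
  exact mul_right_cancel₀ hz h'

end ClassLogic

section Assemble
variable {F : Type*} [Field F] [Fintype F]
variable (M : MoufangSet U) (hs : M.Special)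
variable (V : AddSubgroup U) (φ : V ≃+ F) (a : U) (haV : a ∈ V) (ha : a ≠ 0)
variable (hroot : ∀ v : U, v ∈ V → v ≠ 0 → pact (M.μ a) v ∈ V)
variable (hφ : ∀ v w : V, (v : U) ≠ 0 → (w : U) = pact (M.μ a) (v : U) → φ w = -(φ v)⁻¹)
include hs haV ha hroot hφ

lemma param_eq {w t : U} (hwV : w ∈ V) (hw0 : w ≠ 0) (htV : t ∈ V) (ht0 : t ≠ 0)
    (hor : psiF V φ t = psiF V φ w ∨ psiF V φ t = -psiF V φ w) : M.μ t = M.μ w := by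
  rcases hor with h | h
  · rw [psiF_inj V φ htV hwV h]
  · have ht : t = -w := psiF_inj V φ htV (neg_mem hwV) (by rw [psiF_neg V φ hwV, h])
    rw [ht, mu_neg M hs hw0]

lemma TI {x y z : U} (hxV : x ∈ V) (hx0 : x ≠ 0) (hyV : y ∈ V) (hy0 : y ≠ 0)
    (hzV : z ∈ V) (hz0 : z ≠ 0) :
    ∃ c : U, c ∈ V ∧ c ≠ 0 ∧ M.μ x * M.μ y * M.μ z = M.μ c := by
  have hxψ : psiF V φ x ≠ 0 := fun hq => hx0 ((psiF_eq_zero V φ hxV).mp hq)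
  have hyψ : psiF V φ y ≠ 0 := fun hq => hy0 ((psiF_eq_zero V φ hyV).mp hq)
  have hzψ : psiF V φ z ≠ 0 := fun hq => hz0 ((psiF_eq_zero V φ hzV).mp hq)
  by_cases hA : ∃ s : F, s ≠ 0 ∧
      (psiF V φ z = s ^ 2 * psiF V φ y ∨ psiF V φ z = -(s ^ 2 * psiF V φ y))
  · obtain ⟨s, hs', hor⟩ := hA
    refine ⟨psiInv V φ (s ^ 2 * psiF V φ x), psiInv_mem V φ _,
      psiInv_ne_zero V φ (mul_ne_zero (pow_ne_zero 2 hs') hxψ), ?_⟩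
    rw [← scale M hs V φ a haV ha hroot hφ hs' hxV hx0 hyV hy0]
    have hy' : M.μ (psiInv V φ (s ^ 2 * psiF V φ y)) = M.μ z := by
      apply param_eq M hs V φ a haV ha hroot hφ hzV hz0 (psiInv_mem V φ _)
        (psiInv_ne_zero V φ (mul_ne_zero (pow_ne_zero 2 hs') hyψ))
      rw [psiF_psiInv]
      rcases hor with h | h
      · left; rw [h]
      · right; rw [h]; ring
    rw [hy']
    calc M.μ (psiInv V φ (s ^ 2 * psiF V φ x)) * M.μ z * M.μ z
        = M.μ (psiInv V φ (s ^ 2 * psiF V φ x)) * (M.μ z * M.μ z) := by group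
      _ = _ := by rw [mu_sq M hs hz0, mul_one]
  · by_cases hB : ∃ s : F, s ≠ 0 ∧
        (psiF V φ z = s ^ 2 * psiF V φ x ∨ psiF V φ z = -(s ^ 2 * psiF V φ x))
    · obtain ⟨s, hs', hor⟩ := hB
      obtain ⟨hfV, hf0, hfψ⟩ := f_V M hs V φ a ha hroot hφ hxV hx0 hyV hy0
      have hfψ0 : psiF V φ (pact (M.μ x) y) ≠ 0 := fun hq => hf0 ((psiF_eq_zero V φ hfV).mp hq)
      have hmove : M.μ x * M.μ y = M.μ (pact (M.μ x) y) * M.μ x := by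
        rw [← mu_conj M hs hx0 hy0]; group
      rw [hmove]
      refine ⟨psiInv V φ (s ^ 2 * psiF V φ (pact (M.μ x) y)), psiInv_mem V φ _,
        psiInv_ne_zero V φ (mul_ne_zero (pow_ne_zero 2 hs') hfψ0), ?_⟩
      rw [← scale M hs V φ a haV ha hroot hφ hs' hfV hf0 hxV hx0]
      have hx' : M.μ (psiInv V φ (s ^ 2 * psiF V φ x)) = M.μ z := by
        apply param_eq M hs V φ a haV ha hroot hφ hzV hz0 (psiInv_mem V φ _)
          (psiInv_ne_zero V φ (mul_ne_zero (pow_ne_zero 2 hs') hxψ))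
        rw [psiF_psiInv]
        rcases hor with h | h
        · left; rw [h]
        · right; rw [h]; ring
      rw [hx']
      calc M.μ (psiInv V φ (s ^ 2 * psiF V φ (pact (M.μ x) y))) * M.μ z * M.μ z
          = M.μ (psiInv V φ (s ^ 2 * psiF V φ (pact (M.μ x) y))) * (M.μ z * M.μ z) := by group
        _ = _ := by rw [mu_sq M hs hz0, mul_one]
    · obtain ⟨s, hs', hor⟩ := pm_resolve hxψ hyψ hzψ hA hB
      refine ⟨psiInv V φ (s ^ 2 * psiF V φ z), psiInv_mem V φ _,
        psiInv_ne_zero V φ (mul_ne_zero (pow_ne_zero 2 hs') hzψ), ?_⟩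
      rw [show M.μ x * M.μ y * M.μ z = M.μ x * (M.μ y * M.μ z) by group,
        ← scale M hs V φ a haV ha hroot hφ hs' hyV hy0 hzV hz0]
      have hx' : M.μ (psiInv V φ (s ^ 2 * psiF V φ y)) = M.μ x := by
        apply param_eq M hs V φ a haV ha hroot hφ hxV hx0 (psiInv_mem V φ _)
          (psiInv_ne_zero V φ (mul_ne_zero (pow_ne_zero 2 hs') hyψ))
        rw [psiF_psiInv]
        rcases hor with h | h
        · left; rw [h]
        · right; rw [h]; ring
      calc M.μ x * (M.μ (psiInv V φ (s ^ 2 * psiF V φ y)) * M.μ (psiInv V φ (s ^ 2 * psiF V φ z)))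
          = (M.μ x * M.μ (psiInv V φ (s ^ 2 * psiF V φ y))) * M.μ (psiInv V φ (s ^ 2 * psiF V φ z))
            := by group
        _ = _ := by rw [hx', mu_sq M hs hx0, one_mul]

lemma repr_H {g : Equiv.Perm (Option U)} (hg : g ∈ Subgroup.closure (genSet M V)) :
    ∃ x y : U, x ∈ V ∧ x ≠ 0 ∧ y ∈ V ∧ y ≠ 0 ∧ g = M.μ x * M.μ y := by
  induction hg using Subgroup.closure_induction with
  | mem w hw =>
    obtain ⟨b, c, hbV, hb0, hcV, hc0, rfl⟩ := hw
    exact ⟨c, b, hcV, hc0, hbV, hb0, rfl⟩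
  | one => exact ⟨a, a, haV, ha, haV, ha, (mu_sq M hs ha).symm⟩
  | mul g₁ g₂ h₁ h₂ ih₁ ih₂ =>
    obtain ⟨x, y, hxV, hx0, hyV, hy0, rfl⟩ := ih₁
    obtain ⟨z, w, hzV, hz0, hwV, hw0, rfl⟩ := ih₂
    obtain ⟨c, hcV, hc0, hc⟩ := TI M hs V φ a haV ha hroot hφ hyV hy0 hzV hz0 hwV hw0
    exact ⟨x, c, hxV, hx0, hcV, hc0, by
      rw [show M.μ x * M.μ y * (M.μ z * M.μ w) = M.μ x * (M.μ y * M.μ z * M.μ w) by group, hc]⟩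
  | inv g hgc ih =>
    obtain ⟨x, y, hxV, hx0, hyV, hy0, rfl⟩ := ih
    refine ⟨y, x, hyV, hy0, hxV, hx0, ?_⟩
    rw [mul_inv_rev, mu_a_inv M hs hx0, mu_a_inv M hs hy0]

lemma faithful_H {g : Equiv.Perm (Option U)} (hg : g ∈ Subgroup.closure (genSet M V))
    (hfix : ∀ v : U, v ∈ V → g (some v) = some v) : g = 1 := by
  obtain ⟨x, y, hxV, hx0, hyV, hy0, rfl⟩ := repr_H M hs V φ a haV ha hroot hφ hg
  have haψ : psiF V φ a ≠ 0 := fun hq => ha ((psiF_eq_zero V φ haV).mp hq)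
  obtain ⟨h1V, h1ne, h1ψ⟩ := f_V M hs V φ a ha hroot hφ hyV hy0 haV ha
  obtain ⟨h2V, h2ne, h2ψ⟩ := f_V M hs V φ a ha hroot hφ hxV hx0 h1V h1ne
  have happ : (M.μ x * M.μ y) (some a) = some (pact (M.μ x) (pact (M.μ y) a)) := by
    rw [Equiv.Perm.mul_apply, (mu_some M hy0 ha).1, (mu_some M hx0 h1ne).1]
  have heq : pact (M.μ x) (pact (M.μ y) a) = a :=
    Option.some.inj ((happ.symm).trans (hfix a haV))
  have e := h2ψ
  rw [heq, h1ψ] at e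
  have h1ψne : psiF V φ y ≠ 0 := fun hq => hy0 ((psiF_eq_zero V φ hyV).mp hq)
  have hsq : (psiF V φ x - psiF V φ y) * (psiF V φ x + psiF V φ y) = 0 := by
    field_simp at e
    have e2 : psiF V φ y ^ 2 * psiF V φ a = psiF V φ x ^ 2 * psiF V φ a := by
      linear_combination psiF V φ a * e
    have e3 := mul_right_cancel₀ haψ e2
    linear_combination -e3
  rcases mul_eq_zero.mp hsq with h | h
  · have hxy : x = y := psiF_inj V φ hxV hyV (by linear_combination h)
    rw [hxy, mu_sq M hs hy0]
  · have hxy : x = -y := psiF_inj V φ hxV (neg_mem hyV)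
      (by rw [psiF_neg V φ hyV]; linear_combination h)
    rw [hxy, mu_neg M hs hy0, mu_sq M hs hy0]

lemma final :
    IsCyclic ↥(Subgroup.closure (genSet M V)) ∧
    Nonempty (↥(Subgroup.closure (genSet M V)) ≃* ↥(powMonoidHom 2 : Fˣ →* Fˣ).range) := by
  set Θ := Theta M V φ a hs haV ha hroot hφ with hΘ
  have hinj : Function.Injective Θ := by
    rw [injective_iff_map_eq_one]
    intro g hg1
    have hth : theta V φ a (g : Equiv.Perm (Option U)) = 1 := congrArg Units.val hg1
    obtain ⟨_, _, hgV, _, _, _⟩ := theta_spec M hs V φ a haV ha hroot hφ g.2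
    apply Subtype.ext
    apply faithful_H M hs V φ a haV ha hroot hφ g.2
    intro v hv
    rw [(hgV v hv).2.1]
    congr 1
    apply psiF_inj V φ (hgV v hv).1 hv
    rw [(hgV v hv).2.2, hth, one_mul]
  have hrange : Θ.range = (powMonoidHom 2 : Fˣ →* Fˣ).range := by
    apply le_antisymm
    · rintro u ⟨g, rfl⟩
      obtain ⟨hne, ⟨r, hr⟩, _, _, _, _⟩ := theta_spec M hs V φ a haV ha hroot hφ g.2
      have hr0 : r ≠ 0 := by
        intro h0; rw [h0, mul_zero] at hr; exact hne hr
      refine ⟨Units.mk0 r hr0, ?_⟩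
      apply Units.ext
      show ((Units.mk0 r hr0 ^ 2 : Fˣ) : F) = _
      rw [Units.val_pow_eq_pow_val]
      show r ^ 2 = theta V φ a (g : Equiv.Perm (Option U))
      rw [hr]; ring
    · rintro u ⟨t, rfl⟩
      have haψ : psiF V φ a ≠ 0 := fun hq => ha ((psiF_eq_zero V φ haV).mp hq)
      have ht0 : (t : F) ≠ 0 := Units.ne_zero t
      set p := psiInv V φ ((t : F) * psiF V φ a) with hpd
      have hpV : p ∈ V := psiInv_mem V φ _
      have hp0 : p ≠ 0 := psiInv_ne_zero V φ (mul_ne_zero ht0 haψ)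
      have hpψ : psiF V φ p = (t : F) * psiF V φ a := psiF_psiInv V φ _
      have hmem : M.μ p * M.μ a ∈ Subgroup.closure (genSet M V) :=
        Subgroup.subset_closure ⟨a, p, haV, ha, hpV, hp0, rfl⟩
      refine ⟨⟨M.μ p * M.μ a, hmem⟩, ?_⟩
      apply Units.ext
      have hf1 : pact (M.μ a) a = -a := f_self M hs ha
      obtain ⟨h2V, h2ne, h2ψ⟩ :=
        f_V M hs V φ a ha hroot hφ hpV hp0 (neg_mem haV) (neg_ne_zero.mpr ha)
      have happ : pact (M.μ p * M.μ a) a = pact (M.μ p) (-a) := by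
        apply pact_eq
        rw [Equiv.Perm.mul_apply, (mu_some M ha ha).1, hf1,
          (mu_some M hp0 (neg_ne_zero.mpr ha)).1]
      show theta V φ a (M.μ p * M.μ a) = ((powMonoidHom 2 t : Fˣ) : F)
      unfold theta
      rw [happ, h2ψ, hpψ, psiF_neg V φ haV]
      show _ = ((t ^ 2 : Fˣ) : F)
      rw [Units.val_pow_eq_pow_val]
      field_simp
  have e : ↥(Subgroup.closure (genSet M V)) ≃* ↥(powMonoidHom 2 : Fˣ →* Fˣ).range :=
    (MonoidHom.ofInjective hinj).trans (MulEquiv.subgroupCongr hrange)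
  have : Finite ↥(powMonoidHom 2 : Fˣ →* Fˣ).range := by
    have : Finite Fˣ := inferInstance
    infer_instance
  have hc : IsCyclic ↥(powMonoidHom 2 : Fˣ →* Fˣ).range := subgroup_units_cyclic _
  exact ⟨isCyclic_of_surjective e.symm.toMonoidHom e.symm.surjective, ⟨e⟩⟩

end Assemble
end Aux


/-- Let `M(U, τ)` be a special Moufang set with `U` abelian, and let
`V ≤ U` be a root subgroup whose induced Moufang subset is isomorphic to the projective
Moufang set `M(F)` of a finite field `F` (i.e. there is an additive isomorphism `φ : V ≃ F`
intertwining `μ_a|_V` with `x ↦ −x⁻¹`).  Then the group `H₀ = ⟨μ_a μ_b : a, b ∈ V^#⟩`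
acts faithfully on `V` and is cyclic, isomorphic to the group of squares `(F*)²`. -/
theorem stmt_10 [AddCommGroup U] (M : MoufangSet U) (hs : M.Special)
    {F : Type*} [Field F] [Fintype F]
    (V : AddSubgroup U) (a : U) (haV : a ∈ V) (ha : a ≠ 0)
    (hroot : ∀ v : U, v ∈ V → v ≠ 0 → pact (M.μ a) v ∈ V)
    (φ : V ≃+ F)
    (hφ : ∀ v w : V, (v : U) ≠ 0 → (w : U) = pact (M.μ a) (v : U) → φ w = -(φ v)⁻¹) :
    (∀ g ∈ Subgroup.closure {g : Equiv.Perm (Option U) |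
        ∃ b c : U, b ∈ V ∧ b ≠ 0 ∧ c ∈ V ∧ c ≠ 0 ∧ g = M.μ c * M.μ b},
      (∀ v : U, v ∈ V → g (some v) = some v) → g = 1) ∧
    IsCyclic (Subgroup.closure {g : Equiv.Perm (Option U) |
        ∃ b c : U, b ∈ V ∧ b ≠ 0 ∧ c ∈ V ∧ c ≠ 0 ∧ g = M.μ c * M.μ b}) ∧
    Nonempty ((Subgroup.closure {g : Equiv.Perm (Option U) |
        ∃ b c : U, b ∈ V ∧ b ≠ 0 ∧ c ∈ V ∧ c ≠ 0 ∧ g = M.μ c * M.μ b})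
      ≃* (powMonoidHom 2 : Fˣ →* Fˣ).range) := by

  refine ⟨fun g hg hfix => faithful_H M hs V φ a haV ha hroot hφ hg hfix,
    (final M hs V φ a haV ha hroot hφ).1, (final M hs V φ a haV ha hroot hφ).2⟩
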